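/- Let T = ℚ[[x,y,z,w,t]]/((x) ∩ (y,z)), let Q be a prime ideal of T with dim(T/Q) = 1, let v be a nonzero regular element of T, and let P be an associated prime of T/vT. Then Q is not contained in P. -/

import Mathlib

noncomputable section

/-- The power series ring `ℚ[[x,y,z,w,t]]`. -/
abbrev PS : Type := MvPowerSeries (Fin 5) ℚ

/-- The variables `x, y, z, w, t`. -/
def V (i : Fin 5) : PS := MvPowerSeries.X i

/-- The ideal `(x) ∩ (y, z)` of `ℚ[[x,y,z,w,t]]`. -/
def K : Ideal PS := Ideal.span {V 0} ⊓ Ideal.span {V 1, V 2}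

/-- The ring `T = ℚ[[x,y,z,w,t]]/((x) ∩ (y,z))`. -/
abbrev T : Type := PS ⧸ K

/-- The image of `x` in `T`. -/
def xT : T := Ideal.Quotient.mk K (V 0)
/-- The image of `y` in `T`. -/
def yT : T := Ideal.Quotient.mk K (V 1)
/-- The image of `z` in `T`. -/
def zT : T := Ideal.Quotient.mk K (V 2)

open MvPowerSeries

namespace Kill

/-- kill the variables in `S` : keep only monomials with zero exponents on `S`. -/
def killFun (S : Finset (Fin 5)) (f : PS) : PS :=
  fun d => if ∀ i ∈ S, d i = 0 then f d else 0

lemma coeff_kill (S : Finset (Fin 5)) (f : PS) (d : Fin 5 →₀ ℕ) :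
    MvPowerSeries.coeff d (killFun S f) = if ∀ i ∈ S, d i = 0 then MvPowerSeries.coeff d f else 0 := rfl

def killHom (S : Finset (Fin 5)) : PS →+* PS where
  toFun := killFun S
  map_one' := by
    funext d
    show (if ∀ i ∈ S, d i = 0 then (1 : PS) d else 0) = (1 : PS) d
    by_cases h : ∀ i ∈ S, d i = 0
    · rw [if_pos h]
    · rw [if_neg h]
      have hd : d ≠ 0 := by
        intro hd0
        exact h (fun i _ => by simp [hd0])
      have : MvPowerSeries.coeff d (1 : PS) = 0 := by
        rw [MvPowerSeries.coeff_one, if_neg hd]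
      exact this.symm
  map_mul' := by
    intro f g
    funext d
    show MvPowerSeries.coeff d (killFun S (f*g)) = MvPowerSeries.coeff d (killFun S f * killFun S g)
    classical
    rw [coeff_kill, MvPowerSeries.coeff_mul, MvPowerSeries.coeff_mul]
    by_cases h : ∀ i ∈ S, d i = 0
    · rw [if_pos h]
      apply Finset.sum_congr rfl
      rintro ⟨a, b⟩ hab
      rw [Finset.HasAntidiagonal.mem_antidiagonal] at hab
      have ha : ∀ i ∈ S, a i = 0 := by
        intro i hi
        have := h i hi
        rw [← hab] at this
        simpa using (Nat.add_eq_zero.mp (by simpa using this)).1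
      have hb : ∀ i ∈ S, b i = 0 := by
        intro i hi
        have := h i hi
        rw [← hab] at this
        simpa using (Nat.add_eq_zero.mp (by simpa using this)).2
      show _ = MvPowerSeries.coeff a (killFun S f) * MvPowerSeries.coeff b (killFun S g)
      rw [coeff_kill, coeff_kill, if_pos ha, if_pos hb]
    · rw [if_neg h]
      symm
      apply Finset.sum_eq_zero
      rintro ⟨a, b⟩ hab
      rw [Finset.HasAntidiagonal.mem_antidiagonal] at hab
      push_neg at h
      obtain ⟨i, hi, hdi⟩ := h
      have : a i ≠ 0 ∨ b i ≠ 0 := by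
        by_contra hcon
        push_neg at hcon
        apply hdi
        rw [← hab]
        simp [hcon.1, hcon.2]
      show MvPowerSeries.coeff a (killFun S f) * MvPowerSeries.coeff b (killFun S g) = 0
      rcases this with h1 | h1
      · rw [coeff_kill, if_neg (by intro hc; exact h1 (hc i hi)), zero_mul]
      · rw [coeff_kill (S := S) (f := g), if_neg (by intro hc; exact h1 (hc i hi)), mul_zero]
  map_zero' := by
    funext d
    show (if ∀ i ∈ S, d i = 0 then (0:PS) d else 0) = (0:PS) d
    split <;> rfl
  map_add' := by
    intro f g
    funext d
    show (if ∀ i ∈ S, d i = 0 then (f+g) d else 0)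
        = (killFun S f) d + (killFun S g) d
    unfold killFun
    by_cases h : ∀ i ∈ S, d i = 0
    · simp only [if_pos h]; rfl
    · simp only [if_neg h]; norm_num

end Kill

namespace Kill

instance : IsDomain PS := NoZeroDivisors.to_isDomain _

lemma killHom_apply (S : Finset (Fin 5)) (f : PS) : killHom S f = killFun S f := rfl

lemma kill_X_of_not_mem {S : Finset (Fin 5)} {i : Fin 5} (h : i ∉ S) :
    killHom S (MvPowerSeries.X i) = MvPowerSeries.X i := by
  funext d
  show (if ∀ j ∈ S, d j = 0 then (MvPowerSeries.X i : PS) d else 0) = (MvPowerSeries.X i : PS) d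
  by_cases hc : ∀ j ∈ S, d j = 0
  · rw [if_pos hc]
  · rw [if_neg hc]
    push_neg at hc
    obtain ⟨j, hj, hdj⟩ := hc
    have hd : d ≠ Finsupp.single i 1 := by
      intro hd0
      apply hdj
      rw [hd0]
      rw [Finsupp.single_apply, if_neg]
      intro hij
      exact h (hij ▸ hj)
    have : MvPowerSeries.coeff d (MvPowerSeries.X i : PS) = 0 := by
      rw [MvPowerSeries.coeff_X, if_neg hd]
    exact this.symm

lemma kill_X_of_mem {S : Finset (Fin 5)} {i : Fin 5} (h : i ∈ S) :
    killHom S (MvPowerSeries.X i) = 0 := by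
  funext d
  show (if ∀ j ∈ S, d j = 0 then (MvPowerSeries.X i : PS) d else 0) = (0 : PS) d
  by_cases hc : ∀ j ∈ S, d j = 0
  · rw [if_pos hc]
    have hd : d ≠ Finsupp.single i 1 := by
      intro hd0
      have := hc i h
      rw [hd0] at this
      simp at this
    show MvPowerSeries.coeff d (MvPowerSeries.X i : PS) = MvPowerSeries.coeff d (0:PS)
    rw [MvPowerSeries.coeff_X, if_neg hd, MvPowerSeries.coeff_zero]
  · rw [if_neg hc]
    exact (MvPowerSeries.coeff_zero (R := ℚ) d).symm

lemma kill_kill (S S' : Finset (Fin 5)) (f : PS) :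
    killHom S (killHom S' f) = killHom (S ∪ S') f := by
  funext d
  show (if ∀ j ∈ S, d j = 0 then (killFun S' f) d else 0)
      = (if ∀ j ∈ S ∪ S', d j = 0 then f d else 0)
  unfold killFun
  by_cases h1 : ∀ j ∈ S, d j = 0 <;> by_cases h2 : ∀ j ∈ S', d j = 0
  · rw [if_pos h1, if_pos h2, if_pos]
    intro j hj
    rcases Finset.mem_union.mp hj with h | h
    · exact h1 j h
    · exact h2 j h
  · rw [if_pos h1, if_neg h2, if_neg]
    intro hcon
    exact h2 (fun j hj => hcon j (Finset.mem_union_right _ hj))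
  · rw [if_neg h1, if_neg]
    intro hcon
    exact h1 (fun j hj => hcon j (Finset.mem_union_left _ hj))
  · rw [if_neg h1, if_neg]
    intro hcon
    exact h1 (fun j hj => hcon j (Finset.mem_union_left _ hj))

lemma kill_idem (S : Finset (Fin 5)) (f : PS) :
    killHom S (killHom S f) = killHom S f := by
  rw [kill_kill, Finset.union_self]

lemma mem_ker_iff {S : Finset (Fin 5)} {f : PS} :
    f ∈ RingHom.ker (killHom S) ↔ ∀ d : Fin 5 →₀ ℕ, (∀ i ∈ S, d i = 0) → MvPowerSeries.coeff d f = 0 := by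
  rw [RingHom.mem_ker]
  constructor
  · intro h d hd
    have := congrFun h d
    show f d = 0
    rw [show (0:PS) d = 0 from rfl] at this
    rw [← this]
    show f d = (if ∀ i ∈ S, d i = 0 then f d else 0)
    rw [if_pos hd]
  · intro h
    funext d
    show (if ∀ i ∈ S, d i = 0 then f d else 0) = (0:PS) d
    by_cases hd : ∀ i ∈ S, d i = 0
    · rw [if_pos hd]; exact h d hd
    · rw [if_neg hd]; rfl

end Kill

namespace Kill

lemma X_ne_zero (i : Fin 5) : (MvPowerSeries.X i : PS) ≠ 0 := by
  intro h
  have := congrArg (MvPowerSeries.coeff (Finsupp.single i 1)) h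
  rw [MvPowerSeries.coeff_X, if_pos rfl, MvPowerSeries.coeff_zero] at this
  norm_num at this

lemma ker_killHom_eq_span (S : Finset (Fin 5)) :
    RingHom.ker (killHom S) = Ideal.span ((fun i => (MvPowerSeries.X i : PS)) '' S) := by
  apply le_antisymm
  · -- hard direction, by induction on S
    induction S using Finset.induction_on with
    | empty =>
      intro f hf
      have : f = 0 := by
        apply MvPowerSeries.ext
        intro d
        rw [MvPowerSeries.coeff_zero]
        exact mem_ker_iff.mp hf d (by simp)
      rw [this]
      exact Ideal.zero_mem _
    | @insert i S hi IH =>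
      intro f hf
      have h1 : (MvPowerSeries.X i : PS) ∣ (f - killHom {i} f) := by
        rw [MvPowerSeries.X_dvd_iff]
        intro m hm
        rw [map_sub]
        rw [show MvPowerSeries.coeff m (killHom {i} f)
            = (if ∀ j ∈ ({i} : Finset (Fin 5)), m j = 0 then MvPowerSeries.coeff m f else 0) from rfl]
        rw [if_pos (by intro j hj; rw [Finset.mem_singleton] at hj; rw [hj]; exact hm)]
        ring
      have h2 : killHom {i} f ∈ RingHom.ker (killHom S) := by
        rw [RingHom.mem_ker, kill_kill]
        have : S ∪ {i} = insert i S := by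
          rw [Finset.union_comm, ← Finset.insert_eq]
        rw [this]
        exact RingHom.mem_ker.mp hf
      have h3 := IH h2
      have : f = (f - killHom {i} f) + killHom {i} f := by ring
      rw [this]
      apply Ideal.add_mem
      · obtain ⟨g, hg⟩ := h1
        rw [hg]
        apply Ideal.mul_mem_right
        apply Ideal.subset_span
        exact ⟨i, by simp, rfl⟩
      · apply Ideal.span_mono _ h3
        apply Set.image_mono
        intro j hj
        simp only [Finset.coe_insert, Set.mem_insert_iff]
        exact Or.inr hj
  · rw [Ideal.span_le]
    rintro _ ⟨i, hi, rfl⟩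
    exact RingHom.mem_ker.mpr (kill_X_of_mem (by simpa using hi))

lemma isPrime_ker (S : Finset (Fin 5)) : (RingHom.ker (killHom S)).IsPrime :=
  RingHom.ker_isPrime _

lemma X_not_mem_ker {S : Finset (Fin 5)} {j : Fin 5} (h : j ∉ S) :
    (MvPowerSeries.X j : PS) ∉ RingHom.ker (killHom S) := by
  rw [RingHom.mem_ker, kill_X_of_not_mem h]
  exact X_ne_zero j

lemma prime_X (i : Fin 5) : Prime (MvPowerSeries.X i : PS) := by
  rw [← Ideal.span_singleton_prime (X_ne_zero i)]
  have : ({(MvPowerSeries.X i : PS)} : Set PS) = (fun j => (MvPowerSeries.X j : PS)) '' ({i} : Finset (Fin 5)) := by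
    simp
  rw [this, ← ker_killHom_eq_span]
  exact isPrime_ker _

end Kill

namespace Kill

open MvPowerSeries

lemma X_not_dvd_X {i j : Fin 5} (h : i ≠ j) : ¬ (X i : PS) ∣ X j := by
  intro ⟨t, ht⟩
  have h1 : killHom {i} (X j : PS) = X j := kill_X_of_not_mem (by simp [Ne.symm h])
  have h2 : killHom {i} ((X i : PS) * t) = 0 := by
    rw [map_mul, kill_X_of_mem (by simp), zero_mul]
  rw [ht, h2] at h1
  exact X_ne_zero j (ht.trans h1.symm)

lemma pairKoszul {u2 u3 : Fin 5} (h23 : u2 ≠ u3) (k : ℕ) :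
    ∀ (l : ℕ) (V A B C : PS), X u2 ^ k * A = V * B → X u3 ^ l * A = V * C → V ∣ A := by
  intro l
  induction l with
  | zero =>
    intro V A B C _ h2
    rw [pow_zero, one_mul] at h2
    exact ⟨C, h2⟩
  | succ l IH =>
    intro V A B C h1 h2
    by_cases hV : V = 0
    · subst hV
      rw [zero_mul] at h1
      have : A = 0 := by
        rcases mul_eq_zero.mp h1 with h | h
        · exact absurd h (pow_ne_zero _ (X_ne_zero u2))
        · exact h
      rw [this]
    · have key : X u3 ^ (l+1) * B = X u2 ^ k * C := by
        have : V * (X u3 ^ (l+1) * B) = V * (X u2 ^ k * C) := by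
          calc V * (X u3 ^ (l+1) * B) = X u3 ^ (l+1) * (V * B) := by ring
          _ = X u3 ^ (l+1) * (X u2 ^ k * A) := by rw [h1]
          _ = X u2 ^ k * (X u3 ^ (l+1) * A) := by ring
          _ = X u2 ^ k * (V * C) := by rw [h2]
          _ = V * (X u2 ^ k * C) := by ring
        exact mul_left_cancel₀ hV this
      have hdvd : (X u3 : PS) ∣ C := by
        have h3 : (X u3 : PS) ∣ X u2 ^ k * C := by
          refine ⟨X u3 ^ l * B, ?_⟩
          rw [← key]; ring
        rcases (prime_X u3).2.2 _ _ h3 with h | h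
        · exact absurd ((prime_X u3).dvd_of_dvd_pow h) (X_not_dvd_X (Ne.symm h23))
        · exact h
      obtain ⟨C1, hC1⟩ := hdvd
      apply IH V A B C1 h1
      apply mul_left_cancel₀ (X_ne_zero u3)
      calc X u3 * (X u3 ^ l * A) = X u3 ^ (l+1) * A := by ring
      _ = V * (X u3 * C1) := by rw [h2, hC1]
      _ = X u3 * (V * C1) := by ring

lemma dvd_of_dvd_X_pow_mul {u1 : Fin 5} {V : PS} (hv : ¬ (X u1 : PS) ∣ V) :
    ∀ (m : ℕ) (w : PS), V ∣ X u1 ^ m * w → V ∣ w := by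
  intro m
  induction m with
  | zero => intro w h; rwa [pow_zero, one_mul] at h
  | succ m IH =>
    intro w ⟨H, hH⟩
    have hXH : (X u1 : PS) ∣ V * H := ⟨X u1 ^ m * w, by rw [← hH]; ring⟩
    have : (X u1 : PS) ∣ H := by
      rcases (prime_X u1).2.2 _ _ hXH with h | h
      · exact absurd h hv
      · exact h
    obtain ⟨H1, hH1⟩ := this
    apply IH w
    refine ⟨H1, ?_⟩
    apply mul_left_cancel₀ (X_ne_zero u1)
    calc X u1 * (X u1 ^ m * w) = X u1 ^ (m+1) * w := by ring
    _ = V * (X u1 * H1) := by rw [hH, hH1]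
    _ = X u1 * (V * H1) := by ring

lemma telescope_dvd (u1 : Fin 5) (c : ℕ → PS) (hc : ∀ N, (X u1 : PS) ^ N ∣ (c (N+1) - c N)) :
    ∀ N M, N ≤ M → (X u1 : PS) ^ N ∣ (c M - c N) := by
  intro N M hNM
  induction M with
  | zero =>
    have : N = 0 := Nat.le_zero.mp hNM
    subst this; simp
  | succ M IH =>
    rcases Nat.lt_or_ge N (M+1) with h | h
    · have hNM' : N ≤ M := Nat.lt_succ_iff.mp h
      have h1 := IH hNM'
      have h2 : (X u1 : PS) ^ N ∣ (c (M+1) - c M) :=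
        dvd_trans (pow_dvd_pow _ hNM') (hc M)
      have : c (M+1) - c N = (c (M+1) - c M) + (c M - c N) := by ring
      rw [this]
      exact dvd_add h2 h1
    · have : N = M + 1 := le_antisymm hNM h
      subst this; simp

lemma exists_limit (u1 : Fin 5) (c : ℕ → PS) (hc : ∀ N, (X u1 : PS) ^ N ∣ (c (N+1) - c N)) :
    ∃ L : PS, ∀ N, (X u1 : PS) ^ N ∣ (L - c N) := by
  refine ⟨(fun d => MvPowerSeries.coeff d (c (d u1 + 1))), ?_⟩
  intro N
  rw [MvPowerSeries.X_pow_dvd_iff]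
  intro m hm
  erw [map_sub]
  have hLm : MvPowerSeries.coeff m ((fun d => MvPowerSeries.coeff d (c (d u1 + 1))) : PS)
      = MvPowerSeries.coeff m (c (m u1 + 1)) := rfl
  rw [hLm]
  have hle : m u1 + 1 ≤ N := hm
  have := telescope_dvd u1 c hc (m u1 + 1) N hle
  rw [MvPowerSeries.X_pow_dvd_iff] at this
  have h0 := this m (Nat.lt_succ_self _)
  rw [map_sub] at h0
  linarith [h0]

lemma eq_zero_of_forall_X_pow_dvd (u1 : Fin 5) (w : PS) (h : ∀ N, (X u1 : PS) ^ N ∣ w) : w = 0 := by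
  apply MvPowerSeries.ext
  intro d
  rw [MvPowerSeries.coeff_zero]
  have := (MvPowerSeries.X_pow_dvd_iff.mp (h (d u1 + 1))) d (Nat.lt_succ_self _)
  exact this

end Kill

namespace Kill

open MvPowerSeries

lemma kill_ker_mem_span {S₀ : Finset (Fin 5)} {u1 : Fin 5} {w : PS}
    (hw : w ∈ RingHom.ker (killHom (insert u1 S₀))) :
    killHom S₀ w ∈ Ideal.span {(X u1 : PS)} := by
  have h1 : killHom S₀ w ∈ Ideal.map (killHom S₀) (RingHom.ker (killHom (insert u1 S₀))) :=
    Ideal.mem_map_of_mem _ hw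
  have h2 : Ideal.map (killHom S₀) (RingHom.ker (killHom (insert u1 S₀)))
      ≤ Ideal.span {(X u1 : PS)} := by
    rw [ker_killHom_eq_span, Ideal.map_span]
    rw [Ideal.span_le]
    rintro _ ⟨_, ⟨i, hi, rfl⟩, rfl⟩
    simp only [Finset.coe_insert, Set.mem_insert_iff] at hi
    rcases hi with h | h
    · subst h
      by_cases hmem : i ∈ S₀
      · rw [kill_X_of_mem hmem]; exact Ideal.zero_mem _
      · rw [kill_X_of_not_mem hmem]
        exact Ideal.subset_span rfl
    · rw [kill_X_of_mem (by simpa using h)]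
      exact Ideal.zero_mem _
  exact h2 h1

lemma X_pow_factor {u1 : Fin 5} {v : PS} (hnd : ¬ (X u1 : PS) ∣ v) :
    ∀ (N : ℕ) (e t : PS), v * e = X u1 ^ N * t → (X u1 : PS) ^ N ∣ e := by
  intro N
  induction N with
  | zero => intro e t _; simp
  | succ N IH =>
    intro e t h
    have hXe : (X u1 : PS) ∣ v * e := ⟨X u1 ^ N * t, by rw [h]; ring⟩
    have : (X u1 : PS) ∣ e := by
      rcases (prime_X u1).2.2 _ _ hXe with hh | hh
      · exact absurd hh hnd
      · exact hh
    obtain ⟨e1, he1⟩ := this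
    have h' : v * e1 = X u1 ^ N * t := by
      apply mul_left_cancel₀ (X_ne_zero u1)
      calc X u1 * (v * e1) = v * (X u1 * e1) := by ring
      _ = v * e := by rw [he1]
      _ = X u1 ^ (N+1) * t := h
      _ = X u1 * (X u1 ^ N * t) := by ring
    obtain ⟨e2, he2⟩ := IH e1 t h'
    exact ⟨e2, by rw [he1, he2]; ring⟩

lemma core_main (S₀ : Finset (Fin 5)) (u1 u2 u3 : Fin 5)
    (hu1 : u1 ∉ S₀) (hu2 : u2 ∉ S₀) (hu3 : u3 ∉ S₀)
    (h12 : u1 ≠ u2) (h13 : u1 ≠ u3) (h23 : u2 ≠ u3)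
    (G : Set PS)
    (k : ℕ) (s : PS) (hg2 : (X u2 ^ k - X u1 * s) ∈ G)
    (l : ℕ) (s' : PS) (hg3 : (X u3 ^ l - X u1 * s') ∈ G)
    (v a : PS) (hvfix : killHom S₀ v = v) (hafix : killHom S₀ a = a)
    (hv0 : v ≠ 0) (hva : ¬ v ∣ a)
    (hG1 : ∀ g ∈ G, v ∣ g * a)
    (hnd : ¬ (X u1 : PS) ∣ v) : False := by
  classical
  set κ := killHom (insert u1 S₀) with hκ
  have hκX2 : κ (X u2) = X u2 := kill_X_of_not_mem (by simp [Ne.symm h12, hu2])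
  have hκX3 : κ (X u3) = X u3 := kill_X_of_not_mem (by simp [Ne.symm h13, hu3])
  have hκX1 : κ (X u1) = 0 := kill_X_of_mem (by simp)
  have hκv0 : κ v ≠ 0 := by
    intro h0
    apply hnd
    have hker : v ∈ RingHom.ker κ := RingHom.mem_ker.mpr h0
    have := kill_ker_mem_span (u1 := u1) (S₀ := S₀) hker
    rw [hvfix] at this
    exact Ideal.mem_span_singleton.mp this
  -- main induction
  have claim : ∀ N : ℕ, ∃ c d : PS, a = v * c + X u1 ^ N * d ∧ killHom S₀ d = d ∧
      ∀ g ∈ G, v ∣ g * d := by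
    intro N
    induction N with
    | zero => exact ⟨0, a, by ring, hafix, hG1⟩
    | succ N IH =>
      obtain ⟨c, d, hcd, hdfix, hGd⟩ := IH
      obtain ⟨C, hC⟩ := hGd _ hg2
      obtain ⟨C', hC'⟩ := hGd _ hg3
      -- apply κ to the two relations
      have hkd2 : X u2 ^ k * κ d = κ v * κ C := by
        have h := congrArg κ hC
        rw [map_mul, map_mul, map_sub, map_mul, map_pow, hκX1, hκX2, zero_mul, sub_zero] at h
        exact h
      have hkd3 : X u3 ^ l * κ d = κ v * κ C' := by
        have h := congrArg κ hC'
        rw [map_mul, map_mul, map_sub, map_mul, map_pow, hκX1, hκX3, zero_mul, sub_zero] at h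
        exact h
      obtain ⟨D0, hD0⟩ := pairKoszul h23 k l (κ v) (κ d) (κ C) (κ C') hkd2 hkd3
      -- d - v * (κ D0) ∈ ker κ
      have hDfix : κ d = κ v * κ D0 := by
        have h := congrArg κ hD0
        rw [map_mul, kill_idem, kill_idem] at h
        exact h
      set D' := killHom S₀ (κ D0) with hD'
      have hD'fix : killHom S₀ D' = D' := by rw [hD']; exact kill_idem _ _
      have hcomp : κ D' = κ D0 := by
        rw [hD', hκ, kill_kill, kill_kill]
        have hU : (insert u1 S₀ ∪ S₀) ∪ insert u1 S₀ = insert u1 S₀ := by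
          ext j
          simp only [Finset.mem_union, Finset.mem_insert]
          tauto
        rw [hU]
      have hker : d - v * D' ∈ RingHom.ker κ := by
        rw [RingHom.mem_ker, map_sub, map_mul, hcomp, hDfix]
        ring
      have hmem : d - v * D' ∈ Ideal.span {(X u1 : PS)} := by
        have h := kill_ker_mem_span (u1 := u1) (S₀ := S₀) hker
        rw [map_sub, map_mul, hdfix, hvfix, hD'fix] at h
        exact h
      obtain ⟨E0, hE0⟩ := Ideal.mem_span_singleton.mp hmem
      -- hE0 : d - v * D' = X u1 * E0
      have hE0fix : killHom S₀ E0 = E0 := by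
        apply mul_left_cancel₀ (X_ne_zero u1)
        have h := congrArg (killHom S₀) hE0
        rw [map_sub, map_mul, map_mul, hdfix, hvfix, hD'fix,
          kill_X_of_not_mem hu1] at h
        calc (X u1 : PS) * killHom S₀ E0 = d - v * D' := h.symm
        _ = X u1 * E0 := hE0
      have hdsplit : d = v * D' + X u1 * E0 := by linear_combination hE0
      refine ⟨c + X u1 ^ N * D', E0, ?_, hE0fix, ?_⟩
      · rw [hcd, hdsplit]; ring
      · intro g hgG
        have heq : X u1 ^ (N+1) * (g * E0) = g * a - v * ((c + X u1 ^ N * D') * g) := by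
          rw [hcd, hdsplit]; ring
        have hdvd : v ∣ X u1 ^ (N+1) * (g * E0) := by
          rw [heq]
          exact dvd_sub (hG1 g hgG) ⟨(c + X u1 ^ N * D') * g, rfl⟩
        exact dvd_of_dvd_X_pow_mul hnd _ _ hdvd
  -- extract sequences and pass to the limit
  choose cfun dfun h1 _ _ using claim
  have hcoh : ∀ N, (X u1 : PS) ^ N ∣ (cfun (N+1) - cfun N) := by
    intro N
    have hv_eq : v * (cfun (N+1) - cfun N) = X u1 ^ N * (dfun N - X u1 * dfun (N+1)) := by
      linear_combination (h1 N) - (h1 (N+1))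
    exact X_pow_factor hnd N _ _ hv_eq
  obtain ⟨L, hL⟩ := exists_limit u1 cfun hcoh
  apply hva
  refine ⟨L, ?_⟩
  have hzero : a - v * L = 0 := by
    apply eq_zero_of_forall_X_pow_dvd u1
    intro N
    have heq : a - v * L = v * (cfun N - L) + X u1 ^ N * dfun N := by
      linear_combination (h1 N)
    rw [heq]
    apply dvd_add
    · obtain ⟨t, ht⟩ := hL N
      exact ⟨-(v*t), by rw [show cfun N - L = -(L - cfun N) by ring, ht]; ring⟩
    · exact ⟨dfun N, rfl⟩
  linear_combination hzero

end Kill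

namespace Kill

open MvPowerSeries

lemma core (S₀ : Finset (Fin 5)) (u1 u2 u3 : Fin 5)
    (hu1 : u1 ∉ S₀) (hu2 : u2 ∉ S₀) (hu3 : u3 ∉ S₀)
    (h12 : u1 ≠ u2) (h13 : u1 ≠ u3) (h23 : u2 ≠ u3)
    (G : Set PS)
    (hG2 : ∃ (k : ℕ) (s : PS), (X u2 ^ k - X u1 * s) ∈ G)
    (hG3 : ∃ (l : ℕ) (s' : PS), (X u3 ^ l - X u1 * s') ∈ G)
    (hG4 : ∃ g ∈ G, ¬ (X u1 : PS) ∣ g)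
    (v a : PS) (hvfix : killHom S₀ v = v) (hafix : killHom S₀ a = a)
    (hv0 : v ≠ 0) (hva : ¬ v ∣ a)
    (hG1 : ∀ g ∈ G, v ∣ g * a) : False := by
  obtain ⟨k, s, hg2⟩ := hG2
  obtain ⟨l, s', hg3⟩ := hG3
  obtain ⟨g0, hg0G, hg0nd⟩ := hG4
  have claim : ∀ e : ℕ, ∀ v a : PS, killHom S₀ v = v → killHom S₀ a = a → v ≠ 0 →
      ¬ v ∣ a → (∀ g ∈ G, v ∣ g * a) → ¬ (X u1 : PS)^e ∣ v → False := by
    intro e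
    induction e with
    | zero =>
      intro v a _ _ _ _ _ hnd
      exact hnd (by simpa using one_dvd v)
    | succ e IH =>
      intro v a hvfix hafix hv0 hva hG1 hnd
      by_cases hX : (X u1 : PS) ∣ v
      · obtain ⟨v', hv'⟩ := hX
        have hXga : (X u1 : PS) ∣ g0 * a := by
          obtain ⟨t, ht⟩ := hG1 g0 hg0G
          exact ⟨v' * t, by rw [ht, hv']; ring⟩
        have hXa : (X u1 : PS) ∣ a := by
          rcases (prime_X u1).2.2 _ _ hXga with h | h
          · exact absurd h hg0nd
          · exact h
        obtain ⟨a', ha'⟩ := hXa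
        have hv'fix : killHom S₀ v' = v' := by
          apply mul_left_cancel₀ (X_ne_zero u1)
          have h := congrArg (killHom S₀) hv'
          rw [map_mul, kill_X_of_not_mem hu1, hvfix] at h
          exact h.symm.trans hv'
        have ha'fix : killHom S₀ a' = a' := by
          apply mul_left_cancel₀ (X_ne_zero u1)
          have h := congrArg (killHom S₀) ha'
          rw [map_mul, kill_X_of_not_mem hu1, hafix] at h
          exact h.symm.trans ha'
        have hv'0 : v' ≠ 0 := by
          intro h0
          exact hv0 (by rw [hv', h0, mul_zero])
        have hva' : ¬ v' ∣ a' := by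
          rintro ⟨t, ht⟩
          exact hva ⟨t, by rw [ha', ht, hv']; ring⟩
        have hG1' : ∀ g ∈ G, v' ∣ g * a' := by
          intro g hg
          obtain ⟨t, ht⟩ := hG1 g hg
          refine ⟨t, ?_⟩
          apply mul_left_cancel₀ (X_ne_zero u1)
          calc X u1 * (g * a') = g * (X u1 * a') := by ring
          _ = g * a := by rw [← ha']
          _ = v * t := ht
          _ = X u1 * (v' * t) := by rw [hv']; ring
        have hnd' : ¬ (X u1 : PS)^e ∣ v' := by
          intro ⟨t, ht⟩
          exact hnd ⟨t, by rw [hv', ht]; ring⟩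
        exact IH v' a' hv'fix ha'fix hv'0 hva' hG1' hnd'
      · exact core_main S₀ u1 u2 u3 hu1 hu2 hu3 h12 h13 h23 G k s hg2 l s' hg3
          v a hvfix hafix hv0 hva hG1 hX
  have hex : ∃ e, ¬ (X u1 : PS)^e ∣ v := by
    by_contra h
    push_neg at h
    exact hv0 (eq_zero_of_forall_X_pow_dvd u1 v h)
  obtain ⟨e, he⟩ := hex
  exact claim e v a hvfix hafix hv0 hva hG1 he

end Kill

namespace Kill

open MvPowerSeries

/-- the maximal ideal of PS, as kernel of "constant coefficient" kill map -/
def MaxI : Ideal PS := RingHom.ker (killHom Finset.univ)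

lemma prime_le_MaxI (S : Ideal PS) (hS : S.IsPrime) : S ≤ MaxI := by
  intro s hs
  rw [MaxI, mem_ker_iff]
  intro d hd
  have hd0 : d = 0 := by
    ext i
    exact hd i (Finset.mem_univ i)
  subst hd0
  by_contra hcc
  have : IsUnit s := by
    rw [MvPowerSeries.isUnit_iff_constantCoeff]
    exact isUnit_iff_ne_zero.mpr hcc
  exact hS.ne_top (Ideal.eq_top_of_isUnit_mem S hs this)

lemma X_mem_MaxI (i : Fin 5) : (X i : PS) ∈ MaxI :=
  RingHom.mem_ker.mpr (kill_X_of_mem (Finset.mem_univ i))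

lemma betaCore (S₀ : Finset (Fin 5)) (u1 u2 u3 : Fin 5)
    (hu1 : u1 ∉ S₀) (hu2 : u2 ∉ S₀) (hu3 : u3 ∉ S₀)
    (h12 : u1 ≠ u2) (h13 : u1 ≠ u3) (h23 : u2 ≠ u3)
    (q : Ideal PS) (hq : q.IsPrime)
    (hchain : ∀ S : Ideal PS, S.IsPrime → q < S → S < MaxI → False)
    (vv aa : PS) (hvfix : killHom S₀ vv = vv) (hafix : killHom S₀ aa = aa)
    (hv0 : vv ≠ 0) (hva : ¬ vv ∣ aa)
    (hG1 : ∀ r ∈ q, vv ∣ (killHom S₀ r) * aa)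
    (hu1q : (X u1 : PS) ∉ q) : False := by
  set G : Set PS := (fun r => killHom S₀ r) '' (q : Set PS) with hG
  -- powers of other variables lie in q + (X u1)
  have hrad : ∀ j : Fin 5, j ≠ u1 → j ∉ S₀ → ∃ (k : ℕ) (s : PS), (X j ^ k - X u1 * s) ∈ G := by
    intro j hj hjS
    have hmem : (X j : PS) ∈ (q ⊔ Ideal.span {(X u1 : PS)}).radical := by
      rw [Ideal.radical_eq_sInf]
      rw [Ideal.mem_sInf]
      rintro S ⟨hle, hSprime⟩
      by_contra hnot
      apply hchain S hSprime
      · apply lt_of_le_of_ne (le_trans le_sup_left hle)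
        intro heq
        apply hu1q
        rw [heq]
        exact hle (Submodule.mem_sup_right (Ideal.subset_span rfl))
      · apply lt_of_le_of_ne (prime_le_MaxI S hSprime)
        intro heq
        exact hnot (heq ▸ X_mem_MaxI j)
    rw [Ideal.mem_radical_iff] at hmem
    obtain ⟨k, hk⟩ := hmem
    rw [Submodule.mem_sup] at hk
    obtain ⟨y, hy, z, hz, hyz⟩ := hk
    obtain ⟨s, hs⟩ := Ideal.mem_span_singleton.mp hz
    refine ⟨k, killHom S₀ s, ?_⟩
    have hyq : (X j ^ k - X u1 * s) = y := by rw [← hyz, hs]; ring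
    refine ⟨X j ^ k - X u1 * s, by rw [hyq]; exact hy, ?_⟩
    show killHom S₀ (X j ^ k - X u1 * s) = X j ^ k - X u1 * killHom S₀ s
    rw [map_sub, map_mul, map_pow, kill_X_of_not_mem hjS, kill_X_of_not_mem hu1]
  have hG2 := hrad u2 (Ne.symm h12) hu2
  have hG3 := hrad u3 (Ne.symm h13) hu3
  -- an element of G not divisible by X u1
  have hG4 : ∃ g ∈ G, ¬ (X u1 : PS) ∣ g := by
    have hnotle : ¬ q ≤ RingHom.ker (killHom (insert u1 S₀)) := by
      intro hle
      apply hchain (RingHom.ker (killHom (insert u1 S₀))) (isPrime_ker _)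
      · apply lt_of_le_of_ne hle
        intro heq
        apply hu1q
        rw [heq]
        exact RingHom.mem_ker.mpr (kill_X_of_mem (Finset.mem_insert_self _ _))
      · apply lt_of_le_of_ne (prime_le_MaxI _ (isPrime_ker _))
        intro heq
        have : (X u2 : PS) ∈ RingHom.ker (killHom (insert u1 S₀)) := heq ▸ X_mem_MaxI u2
        refine X_not_mem_ker ?_ this
        intro hmem
        rcases Finset.mem_insert.mp hmem with h | h
        · exact h12 h.symm
        · exact hu2 h
    obtain ⟨p, hpq, hpker⟩ := SetLike.not_le_iff_exists.mp hnotle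
    refine ⟨killHom S₀ p, ⟨p, hpq, rfl⟩, ?_⟩
    rintro ⟨t, ht⟩
    apply hpker
    rw [RingHom.mem_ker]
    have h1 : killHom (insert u1 S₀) (killHom S₀ p) = killHom (insert u1 S₀) p := by
      rw [kill_kill,
        show insert u1 S₀ ∪ S₀ = insert u1 S₀ from by
          ext j; simp only [Finset.mem_union, Finset.mem_insert]; tauto]
    have h2 : killHom (insert u1 S₀) (X u1 * t) = 0 := by
      rw [map_mul, kill_X_of_mem (Finset.mem_insert_self _ _), zero_mul]
    rw [← h1, ht, h2]
  exact core S₀ u1 u2 u3 hu1 hu2 hu3 h12 h13 h23 G hG2 hG3 hG4 vv aa hvfix hafix hv0 hva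
    (by rintro g ⟨r, hr, rfl⟩; exact hG1 r hr)

lemma branchCore (S₀ : Finset (Fin 5)) (w1 w2 w3 : Fin 5)
    (hw1 : w1 ∉ S₀) (hw2 : w2 ∉ S₀) (hw3 : w3 ∉ S₀)
    (h12 : w1 ≠ w2) (h13 : w1 ≠ w3) (h23 : w2 ≠ w3)
    (q : Ideal PS) (hq : q.IsPrime)
    (hchain : ∀ S : Ideal PS, S.IsPrime → q < S → S < MaxI → False)
    (vv aa : PS) (hvfix : killHom S₀ vv = vv) (hafix : killHom S₀ aa = aa)
    (hv0 : vv ≠ 0) (hva : ¬ vv ∣ aa)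
    (hG1 : ∀ r ∈ q, vv ∣ (killHom S₀ r) * aa) : False := by
  by_cases hx1 : (X w1 : PS) ∈ q
  · by_cases hx2 : (X w2 : PS) ∈ q
    · by_cases hx3 : (X w3 : PS) ∈ q
      · -- all three in q : use them directly
        apply core S₀ w1 w2 w3 hw1 hw2 hw3 h12 h13 h23
          ((fun r => killHom S₀ r) '' (q : Set PS)) ?_ ?_ ?_ vv aa hvfix hafix hv0 hva
          (by rintro g ⟨r, hr, rfl⟩; exact hG1 r hr)
        · refine ⟨1, 0, ⟨X w2, hx2, ?_⟩⟩
          show killHom S₀ (X w2) = X w2 ^ 1 - X w1 * 0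
          rw [kill_X_of_not_mem hw2]; ring
        · refine ⟨1, 0, ⟨X w3, hx3, ?_⟩⟩
          show killHom S₀ (X w3) = X w3 ^ 1 - X w1 * 0
          rw [kill_X_of_not_mem hw3]; ring
        · refine ⟨X w2, ⟨X w2, hx2, ?_⟩, X_not_dvd_X h12⟩
          show killHom S₀ (X w2) = X w2
          exact kill_X_of_not_mem hw2
      · exact betaCore S₀ w3 w1 w2 hw3 hw1 hw2 (Ne.symm h13) (Ne.symm h23) h12
          q hq hchain vv aa hvfix hafix hv0 hva hG1 hx3
    · exact betaCore S₀ w2 w1 w3 hw2 hw1 hw3 (Ne.symm h12) h23 h13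
        q hq hchain vv aa hvfix hafix hv0 hva hG1 hx2
  · exact betaCore S₀ w1 w2 w3 hw1 hw2 hw3 h12 h13 h23
      q hq hchain vv aa hvfix hafix hv0 hva hG1 hx1

end Kill



namespace Kill

open MvPowerSeries

lemma spanV0_eq : Ideal.span {V 0} = RingHom.ker (killHom {0}) := by
  rw [ker_killHom_eq_span]
  congr 1
  simp [V]

lemma spanV12_eq : Ideal.span {V 1, V 2} = RingHom.ker (killHom {1, 2}) := by
  rw [ker_killHom_eq_span]
  congr 1
  rw [show (({1, 2} : Finset (Fin 5)) : Set (Fin 5)) = {1, 2} by simp]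
  rw [Set.image_insert_eq, Set.image_singleton]
  rfl

end Kill



open Kill MvPowerSeries

/-- Lemma `ExampleQ`. -/
theorem statement_4 (Q : Ideal T) (hQ : Q.IsPrime)
    (hdim : ringKrullDim (T ⧸ Q) = 1)
    (v : T) (hv0 : v ≠ 0) (hvreg : v ∈ nonZeroDivisors T)
    (P : Ideal T) (hP : P ∈ associatedPrimes T (T ⧸ Ideal.span {v})) :
    ¬ Q ≤ P := by
  intro hQP
  obtain ⟨hPprime, x, hx⟩ := isAssociatedPrime_iff.mp hP
  obtain ⟨c, hc⟩ := Ideal.Quotient.mk_surjective x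
  -- members of P are characterized by a colon condition
  have key1 : ∀ r : T, r ∈ P ↔ r * c ∈ Ideal.span {v} := by
    intro r
    rw [hx, Submodule.mem_colon_singleton, Submodule.mem_bot]
    rw [← hc]
    have : r • (Ideal.Quotient.mk (Ideal.span {v}) c) = Ideal.Quotient.mk (Ideal.span {v}) (r * c) := rfl
    rw [this, Ideal.Quotient.eq_zero_iff_mem]
  obtain ⟨vt, hvt⟩ := Ideal.Quotient.mk_surjective (I := K) v
  obtain ⟨ct, hct⟩ := Ideal.Quotient.mk_surjective (I := K) c
  set q : Ideal PS := Ideal.comap (Ideal.Quotient.mk K) P with hqdef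
  haveI hqprime : q.IsPrime := Ideal.IsPrime.comap _
  have mem_span_v : ∀ w : PS, (Ideal.Quotient.mk K) w ∈ Ideal.span {v} ↔
      w ∈ Ideal.span {vt} ⊔ K := by
    intro w
    constructor
    · intro h
      obtain ⟨t, ht⟩ := Ideal.mem_span_singleton.mp h
      obtain ⟨tt, htt⟩ := Ideal.Quotient.mk_surjective (I := K) t
      have : (Ideal.Quotient.mk K) (w - vt * tt) = 0 := by
        rw [map_sub, map_mul, hvt, htt, ht]
        ring
      rw [Ideal.Quotient.eq_zero_iff_mem] at this
      have hw : w = vt * tt + (w - vt * tt) := by ring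
      rw [hw]
      exact Submodule.add_mem_sup (Ideal.mem_span_singleton.mpr ⟨tt, rfl⟩) this
    · intro h
      obtain ⟨y, hy, z, hz, hyz⟩ := Submodule.mem_sup.mp h
      obtain ⟨t, ht⟩ := Ideal.mem_span_singleton.mp hy
      rw [← hyz, map_add, ht, map_mul, hvt]
      rw [(Ideal.Quotient.eq_zero_iff_mem).mpr hz]
      rw [add_zero]
      exact Ideal.mul_mem_right _ _ (Ideal.mem_span_singleton_self v)
  have key2 : ∀ r : PS, r ∈ q ↔ r * ct ∈ Ideal.span {vt} ⊔ K := by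
    intro r
    rw [hqdef, Ideal.mem_comap, key1, ← hct, ← map_mul, mem_span_v]
  have hPne : ct ∉ Ideal.span {vt} ⊔ K := by
    intro h
    apply hPprime.ne_top
    rw [Ideal.eq_top_iff_one]
    have h1 : (1 : PS) ∈ q := (key2 1).mpr (by rwa [one_mul])
    simpa [hqdef] using h1
  -- regularity facts
  have hreg : ∀ w : PS, (Ideal.Quotient.mk K) (vt * w) = 0 → (Ideal.Quotient.mk K) w = 0 := by
    intro w h
    rw [map_mul, hvt] at h
    rw [mul_comm] at h
    exact (mem_nonZeroDivisors_iff.mp hvreg).2 _ h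
  have hvt1 : vt ∉ RingHom.ker (killHom {0}) := by
    intro hmem
    rw [← spanV0_eq] at hmem
    have h1 : vt * X 1 ∈ K := by
      constructor
      · exact Ideal.mul_mem_right _ _ hmem
      · exact Ideal.mul_mem_left _ _ (Ideal.subset_span (by left; rfl))
    have h2 : (Ideal.Quotient.mk K) (X 1 : PS) = 0 :=
      hreg _ ((Ideal.Quotient.eq_zero_iff_mem).mpr h1)
    rw [Ideal.Quotient.eq_zero_iff_mem] at h2
    have h3 : (X 1 : PS) ∈ RingHom.ker (killHom {0}) := by
      rw [← spanV0_eq]; exact h2.1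
    exact X_not_mem_ker (by decide) h3
  have hvt2 : vt ∉ RingHom.ker (killHom {1, 2}) := by
    intro hmem
    rw [← spanV12_eq] at hmem
    have h1 : vt * X 0 ∈ K := by
      constructor
      · exact Ideal.mul_mem_left _ _ (Ideal.subset_span rfl)
      · exact Ideal.mul_mem_right _ _ hmem
    have h2 : (Ideal.Quotient.mk K) (X 0 : PS) = 0 :=
      hreg _ ((Ideal.Quotient.eq_zero_iff_mem).mpr h1)
    rw [Ideal.Quotient.eq_zero_iff_mem] at h2
    have h3 : (X 0 : PS) ∈ RingHom.ker (killHom {1, 2}) := by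
      rw [← spanV12_eq]; exact h2.2
    exact X_not_mem_ker (by decide) h3
  -- the chain contradiction from dim T/Q = 1
  have hchain : ∀ S : Ideal PS, S.IsPrime → q < S → S < MaxI → False := by
    intro S hS h1 h2
    set φ : PS →+* (T ⧸ Q) := (Ideal.Quotient.mk Q).comp (Ideal.Quotient.mk K) with hφdef
    have hφ : Function.Surjective φ :=
      (Ideal.Quotient.mk_surjective).comp (Ideal.Quotient.mk_surjective)
    have hkerφ : RingHom.ker φ ≤ q := by
      rw [hφdef, ← RingHom.comap_ker, Ideal.mk_ker]
      exact fun r hr => (Ideal.mem_comap.mpr (hQP (Ideal.mem_comap.mp hr)))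
    have hrecover : ∀ I : Ideal PS, RingHom.ker φ ≤ I → Ideal.comap φ (Ideal.map φ I) = I := by
      intro I hI
      rw [Ideal.comap_map_of_surjective φ hφ]
      exact sup_eq_left.mpr hI
    have hkS : RingHom.ker φ ≤ S := le_trans hkerφ h1.le
    have hkM : RingHom.ker φ ≤ MaxI := le_trans hkS h2.le
    haveI iA : (Ideal.map φ q).IsPrime := Ideal.map_isPrime_of_surjective hφ hkerφ
    haveI iB : (Ideal.map φ S).IsPrime := Ideal.map_isPrime_of_surjective hφ hkS
    haveI iC : (Ideal.map φ MaxI).IsPrime := by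
      haveI : (MaxI).IsPrime := isPrime_ker _
      exact Ideal.map_isPrime_of_surjective hφ hkM
    have hAB : Ideal.map φ q < Ideal.map φ S := by
      refine lt_of_le_of_ne (Ideal.map_mono h1.le) ?_
      intro heq
      apply h1.ne
      rw [← hrecover q hkerφ, ← hrecover S hkS, heq]
    have hBC : Ideal.map φ S < Ideal.map φ MaxI := by
      refine lt_of_le_of_ne (Ideal.map_mono h2.le) ?_
      intro heq
      apply h2.ne
      rw [← hrecover S hkS, ← hrecover MaxI hkM, heq]
    set A : PrimeSpectrum (T ⧸ Q) := ⟨Ideal.map φ q, iA⟩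
    set B : PrimeSpectrum (T ⧸ Q) := ⟨Ideal.map φ S, iB⟩
    set C : PrimeSpectrum (T ⧸ Q) := ⟨Ideal.map φ MaxI, iC⟩
    have hAB' : A < B := (PrimeSpectrum.asIdeal_lt_asIdeal A B).mp hAB
    have hBC' : B < C := (PrimeSpectrum.asIdeal_lt_asIdeal B C).mp hBC
    let ser : LTSeries (PrimeSpectrum (T ⧸ Q)) :=
      { length := 2
        toFun := ![A, B, C]
        step := by
          intro i
          fin_cases i
          · simpa using hAB'
          · simpa using hBC' }
    have hlen := Order.LTSeries.length_le_krullDim ser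
    have : (2 : WithBot (WithTop ℕ)) ≤ ringKrullDim (T ⧸ Q) := hlen
    rw [hdim] at this
    change (2 : WithBot ℕ∞) ≤ 1 at this
    norm_num at this
  -- branch dichotomy
  by_cases hBr : ∀ r : PS, r * ct ∈ Ideal.span {(X 0 : PS)} ⊔ (Ideal.span {vt} ⊔ K) →
      r * ct ∈ Ideal.span {vt} ⊔ K
  · -- Branch 1 : p₀ = (x)
    have hKle : K ≤ RingHom.ker (killHom {0}) := by
      rw [← spanV0_eq]; exact inf_le_left
    have key3 : ∀ r : PS, r ∈ q ↔ r * ct ∈ Ideal.span {vt} ⊔ RingHom.ker (killHom {0}) := by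
      intro r
      constructor
      · intro hr
        exact (sup_le_sup_left hKle _) ((key2 r).mp hr)
      · intro hr
        apply (key2 r).mpr
        apply hBr
        refine (?_ : Ideal.span {vt} ⊔ RingHom.ker (killHom {0}) ≤ _) hr
        apply sup_le
        · exact le_sup_of_le_right le_sup_left
        · rw [← spanV0_eq]
          exact le_sup_left
    set vv : PS := killHom {0} vt with hvvdef
    set aa : PS := killHom {0} ct with haadef
    have hvfix : killHom {0} vv = vv := kill_idem _ _
    have hafix : killHom {0} aa = aa := kill_idem _ _
    have hvv0 : vv ≠ 0 := fun h0 => hvt1 (RingHom.mem_ker.mpr h0)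
    have memswap : ∀ w : PS, w ∈ Ideal.span {vt} ⊔ RingHom.ker (killHom {0}) →
        vv ∣ killHom {0} w := by
      intro w hw
      obtain ⟨y, hy, z, hz, hyz⟩ := Submodule.mem_sup.mp hw
      obtain ⟨t, ht⟩ := Ideal.mem_span_singleton.mp hy
      refine ⟨killHom {0} t, ?_⟩
      rw [← hyz, map_add, RingHom.mem_ker.mp hz, add_zero, ht, map_mul]
    have hva : ¬ vv ∣ aa := by
      rintro ⟨B0, hB0⟩
      have hB0fix : killHom {0} B0 = B0 := by
        apply mul_left_cancel₀ hvv0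
        have h := congrArg (killHom {0}) hB0
        rw [kill_idem, map_mul, kill_idem] at h
        exact h.symm.trans hB0
      have hker : ct - vt * B0 ∈ RingHom.ker (killHom {0}) := by
        rw [RingHom.mem_ker, map_sub, map_mul, ← hvvdef, ← haadef, hB0fix, hB0, sub_self]
      have : ct ∈ Ideal.span {vt} ⊔ RingHom.ker (killHom {0}) := by
        have : ct = vt * B0 + (ct - vt * B0) := by ring
        rw [this]
        exact Submodule.add_mem_sup (Ideal.mem_span_singleton.mpr ⟨B0, rfl⟩) hker
      have h1 : (1 : PS) ∈ q := (key3 1).mpr (by rwa [one_mul])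
      exact hPprime.ne_top ((Ideal.eq_top_iff_one _).mpr (by simpa [hqdef] using h1))
    have hG1 : ∀ r ∈ q, vv ∣ (killHom {0} r) * aa := by
      intro r hr
      have := memswap _ ((key3 r).mp hr)
      rwa [map_mul] at this
    exact branchCore {0} 1 2 3 (by decide) (by decide) (by decide)
      (by decide) (by decide) (by decide) q hqprime hchain vv aa hvfix hafix hvv0 hva hG1
  · -- Branch 2 : p₀ = (y, z)
    push_neg at hBr
    obtain ⟨r₀, hr₀mem, hr₀not⟩ := hBr
    obtain ⟨y0, hy0, z0, hz0, hyz0⟩ := Submodule.mem_sup.mp hr₀mem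
    obtain ⟨c1, hc1⟩ := Ideal.mem_span_singleton.mp hy0
    -- hc1 : y0 = X 0 * c1 ; hyz0 : y0 + z0 = r₀ * ct ; hz0 : z0 ∈ span vt ⊔ K
    have hr₀q : r₀ ∉ q := fun h => hr₀not ((key2 r₀).mp h)
    have claimA : ∀ r : PS, r ∈ q ↔ r * (X 0 * c1) ∈ Ideal.span {vt} ⊔ K := by
      intro r
      constructor
      · intro hr
        have h1 : r * r₀ ∈ q := Ideal.mul_mem_right _ _ hr
        have h2 := (key2 (r * r₀)).mp h1
        have h3 : r * (X 0 * c1) = (r * r₀) * ct - r * z0 := by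
          rw [← hc1]
          rw [show (r * r₀) * ct = r * (r₀ * ct) by ring, ← hyz0]
          ring
        rw [h3]
        exact Submodule.sub_mem _ h2 (Ideal.mul_mem_left _ _ hz0)
      · intro hr
        have h3 : (r * r₀) * ct = r * (X 0 * c1) + r * z0 := by
          rw [← hc1, show (r * r₀) * ct = r * (r₀ * ct) by ring, ← hyz0]
          ring
        have h2 : (r * r₀) * ct ∈ Ideal.span {vt} ⊔ K := by
          rw [h3]
          exact Submodule.add_mem _ hr (Ideal.mul_mem_left _ _ hz0)
        have h1 : r * r₀ ∈ q := (key2 _).mpr h2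
        rcases hqprime.mem_or_mem h1 with h | h
        · exact h
        · exact absurd h hr₀q
    have claimB : ∀ w : PS, X 0 * w ∈ Ideal.span {vt} ⊔ K ↔
        w ∈ Ideal.span {vt} ⊔ RingHom.ker (killHom {1, 2}) := by
      intro w
      constructor
      · intro hw
        obtain ⟨y, hy, z, hz, hyz⟩ := Submodule.mem_sup.mp hw
        obtain ⟨t, ht⟩ := Ideal.mem_span_singleton.mp hy
        -- z ∈ K : write z = X 0 * z'
        have hzX0 : (X 0 : PS) ∣ z := Ideal.mem_span_singleton.mp hz.1
        obtain ⟨z', hz'⟩ := hzX0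
        have hz'12 : z' ∈ RingHom.ker (killHom {1, 2}) := by
          have h0 : killHom {1,2} z = 0 := by
            have : z ∈ RingHom.ker (killHom {1,2}) := by
              rw [← spanV12_eq]; exact hz.2
            exact RingHom.mem_ker.mp this
          rw [hz', map_mul, kill_X_of_not_mem (by decide)] at h0
          rcases mul_eq_zero.mp h0 with h | h
          · exact absurd h (X_ne_zero 0)
          · exact RingHom.mem_ker.mpr h
        -- vt * t = X 0 * (w - z')
        have hX0dvd : (X 0 : PS) ∣ vt * t := by
          refine ⟨w - z', ?_⟩
          linear_combination hyz - ht - hz'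
        have hX0t : (X 0 : PS) ∣ t := by
          rcases (prime_X 0).2.2 _ _ hX0dvd with h | h
          · exact absurd (spanV0_eq ▸ Ideal.mem_span_singleton.mpr h) hvt1
          · exact h
        obtain ⟨s', hs'⟩ := hX0t
        have hfinal : w = vt * s' + z' := by
          apply mul_left_cancel₀ (X_ne_zero 0)
          linear_combination -hyz + ht + vt * hs' + hz'
        rw [hfinal]
        exact Submodule.add_mem_sup (Ideal.mem_span_singleton.mpr ⟨s', rfl⟩) hz'12
      · intro hw
        obtain ⟨y, hy, z, hz, hyz⟩ := Submodule.mem_sup.mp hw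
        obtain ⟨t, ht⟩ := Ideal.mem_span_singleton.mp hy
        have : X 0 * w = vt * (X 0 * t) + X 0 * z := by
          rw [← hyz, ht]; ring
        rw [this]
        apply Submodule.add_mem_sup (Ideal.mem_span_singleton.mpr ⟨X 0 * t, by ring⟩)
        constructor
        · exact Ideal.mul_mem_right _ _ (Ideal.subset_span rfl)
        · rw [spanV12_eq]
          exact Ideal.mul_mem_left _ _ hz
    have key4 : ∀ r : PS, r ∈ q ↔ r * c1 ∈ Ideal.span {vt} ⊔ RingHom.ker (killHom {1, 2}) := by
      intro r
      rw [claimA, ← claimB]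
      rw [show r * (X 0 * c1) = X 0 * (r * c1) by ring]
    set vv : PS := killHom {1,2} vt with hvvdef
    set aa : PS := killHom {1,2} c1 with haadef
    have hvfix : killHom {1,2} vv = vv := kill_idem _ _
    have hafix : killHom {1,2} aa = aa := kill_idem _ _
    have hvv0 : vv ≠ 0 := fun h0 => hvt2 (RingHom.mem_ker.mpr h0)
    have memswap : ∀ w : PS, w ∈ Ideal.span {vt} ⊔ RingHom.ker (killHom {1,2}) →
        vv ∣ killHom {1,2} w := by
      intro w hw
      obtain ⟨y, hy, z, hz, hyz⟩ := Submodule.mem_sup.mp hw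
      obtain ⟨t, ht⟩ := Ideal.mem_span_singleton.mp hy
      refine ⟨killHom {1,2} t, ?_⟩
      rw [← hyz, map_add, RingHom.mem_ker.mp hz, add_zero, ht, map_mul]
    have hva : ¬ vv ∣ aa := by
      rintro ⟨B0, hB0⟩
      have hB0fix : killHom {1,2} B0 = B0 := by
        apply mul_left_cancel₀ hvv0
        have h := congrArg (killHom {1,2}) hB0
        rw [kill_idem, map_mul, kill_idem] at h
        exact h.symm.trans hB0
      have hker : c1 - vt * B0 ∈ RingHom.ker (killHom {1,2}) := by
        rw [RingHom.mem_ker, map_sub, map_mul, ← hvvdef, ← haadef, hB0fix, hB0, sub_self]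
      have hc1mem : c1 ∈ Ideal.span {vt} ⊔ RingHom.ker (killHom {1,2}) := by
        have : c1 = vt * B0 + (c1 - vt * B0) := by ring
        rw [this]
        exact Submodule.add_mem_sup (Ideal.mem_span_singleton.mpr ⟨B0, rfl⟩) hker
      have h1 : (1 : PS) ∈ q := (key4 1).mpr (by rwa [one_mul])
      exact hPprime.ne_top ((Ideal.eq_top_iff_one _).mpr (by simpa [hqdef] using h1))
    have hG1 : ∀ r ∈ q, vv ∣ (killHom {1,2} r) * aa := by
      intro r hr
      have := memswap _ ((key4 r).mp hr)
      rwa [map_mul] at this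
    exact branchCore {1,2} 0 3 4 (by decide) (by decide) (by decide)
      (by decide) (by decide) (by decide) q hqprime hchain vv aa hvfix hafix hvv0 hva hG1

end
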